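/- In the root system Φ(D₄) with highest root θ = ε₁+ε₂ and S_{±1/2} = {α ∈ Φ(D₄) : (α|θ) = ±1}, for every pair α, β ∈ S_{-1/2} with (α|β) = 1, the set X = { γ ∈ S_{1/2} : (α|γ) = 0 and (γ|β) = -1 } has exactly 2 elements. -/

import Mathlib

/-- Standard basis vector of `ℝ⁴`. -/
noncomputable def eD4 (i : Fin 4) : Fin 4 → ℝ := Pi.single i 1

/-- Standard inner product on `ℝ⁴`. -/
noncomputable def ipD4 (x y : Fin 4 → ℝ) : ℝ := ∑ i, x i * y i

/-- The root system of type `D₄`: the vectors `±εᵢ ± εⱼ`, `i < j`. -/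
def PhiD4 : Set (Fin 4 → ℝ) :=
  { v | ∃ (i j : Fin 4) (μ ν : ℝ), i < j ∧ (μ = 1 ∨ μ = -1) ∧ (ν = 1 ∨ ν = -1) ∧
        v = μ • eD4 i + ν • eD4 j }

/-- The highest root `θ = ε₁ + ε₂` of `D₄`. -/
noncomputable def thetaD4 : Fin 4 → ℝ := eD4 0 + eD4 1

lemma eD4_0 : eD4 0 = ![1,0,0,0] := by funext k; fin_cases k <;> simp [eD4]
lemma eD4_1 : eD4 1 = ![0,1,0,0] := by funext k; fin_cases k <;> simp [eD4]
lemma eD4_2 : eD4 2 = ![0,0,1,0] := by funext k; fin_cases k <;> simp [eD4]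
lemma eD4_3 : eD4 3 = ![0,0,0,1] := by funext k; fin_cases k <;> simp [eD4]
lemma eD4_0' : eD4 ⟨0, by omega⟩ = ![1,0,0,0] := eD4_0
lemma eD4_1' : eD4 ⟨1, by omega⟩ = ![0,1,0,0] := eD4_1
lemma eD4_2' : eD4 ⟨2, by omega⟩ = ![0,0,1,0] := eD4_2
lemma eD4_3' : eD4 ⟨3, by omega⟩ = ![0,0,0,1] := eD4_3

lemma ip_eval (a b c d x y z w : ℝ) : ipD4 ![a,b,c,d] ![x,y,z,w] = a*x+b*y+c*z+d*w := by
  simp [ipD4, Fin.sum_univ_four]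

lemma theta_eval : thetaD4 = ![1,1,0,0] := by
  rw [thetaD4, eD4_0, eD4_1]; funext k; fin_cases k <;> norm_num

lemma smul_vec (μ a b c d : ℝ) : μ • ![a,b,c,d] = ![μ*a,μ*b,μ*c,μ*d] := by
  funext k; fin_cases k <;> simp
lemma neg_vec (a b c d : ℝ) : -![a,b,c,d] = ![-a,-b,-c,-d] := by
  funext k; fin_cases k <;> simp
lemma add_vec (a b c d x y z w : ℝ) : ![a,b,c,d] + ![x,y,z,w] = ![a+x,b+y,c+z,d+w] := by
  funext k; fin_cases k <;> simp
lemma vec_eq_iff (a b c d x y z w : ℝ) : ![a,b,c,d] = ![x,y,z,w] ↔ a=x ∧ b=y ∧ c=z ∧ d=w := by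
  constructor
  · intro h
    exact ⟨congrFun h 0, congrFun h 1, congrFun h 2, congrFun h 3⟩
  · rintro ⟨rfl,rfl,rfl,rfl⟩; rfl

lemma Sneg_cases (α : Fin 4 → ℝ) (hα : α ∈ PhiD4) (h : ipD4 α thetaD4 = -1) :
    α = ![(-1),0,1,0] ∨ α = ![(-1),0,-1,0] ∨ α = ![(-1),0,0,1] ∨ α = ![(-1),0,0,-1] ∨
    α = ![0,(-1),1,0] ∨ α = ![0,(-1),-1,0] ∨ α = ![0,(-1),0,1] ∨ α = ![0,(-1),0,-1] := by
  obtain ⟨i,j,μ,ν,hij,hμ,hν,rfl⟩ := hα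
  fin_cases i <;> fin_cases j <;> rcases hμ with rfl|rfl <;> rcases hν with rfl|rfl <;>
    first
      | (exact absurd hij (by decide))
      | (rw [theta_eval] at h
         norm_num [eD4_0, eD4_1, eD4_2, eD4_3, eD4_0', eD4_1', eD4_2', eD4_3', smul_vec,
           neg_vec, add_vec, ip_eval, vec_eq_iff] at h ⊢)
      | (rw [theta_eval] at h
         norm_num [eD4_0, eD4_1, eD4_2, eD4_3, eD4_0', eD4_1', eD4_2', eD4_3', smul_vec,
           neg_vec, add_vec, ip_eval, vec_eq_iff] at h)

open Classical in
/-- The eight roots of `S_{1/2}`. -/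
noncomputable def S8 : Finset (Fin 4 → ℝ) :=
  { ![1,0,1,0], ![1,0,-1,0], ![1,0,0,1], ![1,0,0,-1],
    ![0,1,1,0], ![0,1,-1,0], ![0,1,0,1], ![0,1,0,-1] }

lemma Spos_iff (γ : Fin 4 → ℝ) : (γ ∈ PhiD4 ∧ ipD4 γ thetaD4 = 1) ↔ γ ∈ S8 := by
  have hmem : γ ∈ S8 ↔ (γ = ![1,0,1,0] ∨ γ = ![1,0,-1,0] ∨ γ = ![1,0,0,1] ∨ γ = ![1,0,0,-1] ∨
      γ = ![0,1,1,0] ∨ γ = ![0,1,-1,0] ∨ γ = ![0,1,0,1] ∨ γ = ![0,1,0,-1]) := by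
    simp [S8]
  rw [hmem]
  constructor
  · rintro ⟨⟨i,j,μ,ν,hij,hμ,hν,rfl⟩, h⟩
    fin_cases i <;> fin_cases j <;> rcases hμ with rfl|rfl <;> rcases hν with rfl|rfl <;>
      first
        | (exact absurd hij (by decide))
        | (rw [theta_eval] at h
           norm_num [eD4_0, eD4_1, eD4_2, eD4_3, eD4_0', eD4_1', eD4_2', eD4_3', smul_vec,
             neg_vec, add_vec, ip_eval, vec_eq_iff] at h ⊢)
        | (rw [theta_eval] at h
           norm_num [eD4_0, eD4_1, eD4_2, eD4_3, eD4_0', eD4_1', eD4_2', eD4_3', smul_vec,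
             neg_vec, add_vec, ip_eval, vec_eq_iff] at h)
  · rintro (rfl|rfl|rfl|rfl|rfl|rfl|rfl|rfl)
    · exact ⟨⟨0,2,1,1, by decide, .inl rfl, .inl rfl,
        by rw [eD4_0, eD4_2, smul_vec, smul_vec, add_vec]; norm_num [vec_eq_iff]⟩,
        by rw [theta_eval, ip_eval]; norm_num⟩
    · exact ⟨⟨0,2,1,-1, by decide, .inl rfl, .inr rfl,
        by rw [eD4_0, eD4_2, smul_vec, smul_vec, add_vec]; norm_num [vec_eq_iff]⟩,
        by rw [theta_eval, ip_eval]; norm_num⟩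
    · exact ⟨⟨0,3,1,1, by decide, .inl rfl, .inl rfl,
        by rw [eD4_0, eD4_3, smul_vec, smul_vec, add_vec]; norm_num [vec_eq_iff]⟩,
        by rw [theta_eval, ip_eval]; norm_num⟩
    · exact ⟨⟨0,3,1,-1, by decide, .inl rfl, .inr rfl,
        by rw [eD4_0, eD4_3, smul_vec, smul_vec, add_vec]; norm_num [vec_eq_iff]⟩,
        by rw [theta_eval, ip_eval]; norm_num⟩
    · exact ⟨⟨1,2,1,1, by decide, .inl rfl, .inl rfl,
        by rw [eD4_1, eD4_2, smul_vec, smul_vec, add_vec]; norm_num [vec_eq_iff]⟩,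
        by rw [theta_eval, ip_eval]; norm_num⟩
    · exact ⟨⟨1,2,1,-1, by decide, .inl rfl, .inr rfl,
        by rw [eD4_1, eD4_2, smul_vec, smul_vec, add_vec]; norm_num [vec_eq_iff]⟩,
        by rw [theta_eval, ip_eval]; norm_num⟩
    · exact ⟨⟨1,3,1,1, by decide, .inl rfl, .inl rfl,
        by rw [eD4_1, eD4_3, smul_vec, smul_vec, add_vec]; norm_num [vec_eq_iff]⟩,
        by rw [theta_eval, ip_eval]; norm_num⟩
    · exact ⟨⟨1,3,1,-1, by decide, .inl rfl, .inr rfl,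
        by rw [eD4_1, eD4_3, smul_vec, smul_vec, add_vec]; norm_num [vec_eq_iff]⟩,
        by rw [theta_eval, ip_eval]; norm_num⟩

open Classical in
lemma X_eq (α β : Fin 4 → ℝ) :
    {γ | γ ∈ PhiD4 ∧ ipD4 γ thetaD4 = 1 ∧ ipD4 α γ = 0 ∧ ipD4 γ β = -1}
      = ↑(S8.filter fun γ => ipD4 α γ = 0 ∧ ipD4 γ β = -1) := by
  ext γ
  simp only [Set.mem_setOf_eq, Finset.coe_filter, ← Spos_iff]
  tauto

set_option maxHeartbeats 4000000 in
theorem D4_case1_count (α β : Fin 4 → ℝ)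
    (hα : α ∈ PhiD4) (hαθ : ipD4 α thetaD4 = -1)
    (hβ : β ∈ PhiD4) (hβθ : ipD4 β thetaD4 = -1)
    (hαβ : ipD4 α β = 1) :
    {γ | γ ∈ PhiD4 ∧ ipD4 γ thetaD4 = 1 ∧ ipD4 α γ = 0 ∧ ipD4 γ β = -1}.ncard = 2 := by
  rw [X_eq α β, Set.ncard_coe_finset]
  rcases Sneg_cases α hα hαθ with rfl|rfl|rfl|rfl|rfl|rfl|rfl|rfl <;>
    rcases Sneg_cases β hβ hβθ with rfl|rfl|rfl|rfl|rfl|rfl|rfl|rfl <;>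
      (try norm_num [ip_eval] at hαβ) <;>
        norm_num [S8, Finset.filter_insert, Finset.filter_singleton, ip_eval, vec_eq_iff,
          Finset.card_insert_of_notMem, Finset.mem_insert, Finset.mem_singleton]
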